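/- Fix k < n. An n-chain Σ over Z/2 in a cube complex X is a cycle if and only if for every k-cube e of X the localised chain loc_e(Σ) in the link lk(e, X) is a cycle. Moreover, if Σ is a boundary then so is loc_e(Σ) for every k-cube e. -/

import Mathlib

open scoped Classical

noncomputable section

/-- A combinatorial cube of a cube complex embedded in a hypercube with coordinate set
`I`: each coordinate is either fixed at `0`/`1` (`some b`) or free (`none`). -/
abbrev QCube (I : Type*) := I → Option Bool

/-- The dimension of a cube: the number of free coordinates. -/
def qdim {I : Type*} [Fintype I] (c : QCube I) : ℕ :=
  (Finset.univ.filter fun i => c i = none).card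

/-- `e` is a face of `c`: wherever `c` is fixed, `e` agrees with it. -/
def IsFaceOf {I : Type*} (e c : QCube I) : Prop := ∀ i, c i ≠ none → e i = c i

/-- A cube complex: a family of cubes closed under taking faces. -/
def IsCubeComplex {I : Type*} (X : Set (QCube I)) : Prop :=
  ∀ c ∈ X, ∀ e : QCube I, IsFaceOf e c → e ∈ X

/-- The cubical boundary over `ZMod 2`: the boundary of a cube is the sum of its
codimension-one faces. -/
def cbdry {I : Type*} [Fintype I] [DecidableEq I] (S : QCube I →₀ ZMod 2) :
    QCube I →₀ ZMod 2 :=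
  S.sum fun c a =>
    ∑ i ∈ Finset.univ.filter (fun i => c i = none),
      (Finsupp.single (Function.update c i (some false)) a
        + Finsupp.single (Function.update c i (some true)) a)

/-- The simplicial boundary over `ZMod 2` of chains in a link (reduced: a vertex has the
empty simplex as boundary). -/
def sbdry {I : Type*} [DecidableEq I] (c : Finset I →₀ ZMod 2) : Finset I →₀ ZMod 2 :=
  c.sum fun σ a => ∑ v ∈ σ, Finsupp.single (σ.erase v) a

/-- The localisation map `loc_e`: a cube `c` containing `e` as a face contributes the
simplex of `lk(e, X)` given by the coordinates which are free in `c` but fixed in `e`. -/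
def loc {I : Type*} [Fintype I] [DecidableEq I] (e : QCube I) (S : QCube I →₀ ZMod 2) :
    Finset I →₀ ZMod 2 :=
  S.sum fun c a =>
    if IsFaceOf e c then
      Finsupp.single (Finset.univ.filter fun i => c i = none ∧ e i ≠ none) a
    else 0

/-- `σ` is a simplex of the link `lk(e, X)`: freeing the coordinates of `σ` in `e`
produces a cube of `X`. -/
def inLink {I : Type*} [DecidableEq I] (X : Set (QCube I)) (e : QCube I) (σ : Finset I) :
    Prop :=
  (∀ i ∈ σ, e i ≠ none) ∧ (fun i => if i ∈ σ then none else e i) ∈ X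

set_option linter.unusedSectionVars false

section Aux

variable {I : Type*} [Fintype I] [DecidableEq I]

/-- The set of free coordinates of a cube. -/
def freeSet (c : QCube I) : Finset I := Finset.univ.filter fun i => c i = none

/-- The simplex associated to a cube `c` containing `e`. -/
def sigmaOf (e c : QCube I) : Finset I :=
  Finset.univ.filter fun i => c i = none ∧ e i ≠ none

lemma qdim_eq_card_freeSet (c : QCube I) : qdim c = (freeSet c).card := rfl

lemma mem_freeSet {c : QCube I} {i : I} : i ∈ freeSet c ↔ c i = none := by
  simp [freeSet]

lemma mem_sigmaOf {e c : QCube I} {i : I} :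
    i ∈ sigmaOf e c ↔ c i = none ∧ e i ≠ none := by
  simp [sigmaOf]

lemma loc_zero (e : QCube I) : loc e (0 : QCube I →₀ ZMod 2) = 0 := by
  simp [loc]

lemma loc_add (e : QCube I) (S T : QCube I →₀ ZMod 2) :
    loc e (S + T) = loc e S + loc e T := by
  unfold loc
  rw [Finsupp.sum_add_index']
  · intro a; split <;> simp
  · intro a b₁ b₂; split <;> simp [Finsupp.single_add]

lemma cbdry_zero : cbdry (0 : QCube I →₀ ZMod 2) = 0 := by
  simp [cbdry]

lemma cbdry_add (S T : QCube I →₀ ZMod 2) :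
    cbdry (S + T) = cbdry S + cbdry T := by
  unfold cbdry
  rw [Finsupp.sum_add_index']
  · intro a; simp
  · intro a b₁ b₂; rw [← Finset.sum_add_distrib]
    refine Finset.sum_congr rfl fun i _ => ?_
    simp [Finsupp.single_add]; abel

lemma sbdry_zero : sbdry (0 : Finset I →₀ ZMod 2) = 0 := by
  simp [sbdry]

lemma sbdry_add (S T : Finset I →₀ ZMod 2) :
    sbdry (S + T) = sbdry S + sbdry T := by
  unfold sbdry
  rw [Finsupp.sum_add_index']
  · intro a; simp
  · intro a b₁ b₂; rw [← Finset.sum_add_distrib]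
    refine Finset.sum_congr rfl fun i _ => ?_
    simp [Finsupp.single_add]

lemma loc_single (e c : QCube I) (a : ZMod 2) :
    loc e (Finsupp.single c a)
      = if IsFaceOf e c then Finsupp.single (sigmaOf e c) a else 0 := by
  unfold loc sigmaOf
  rw [Finsupp.sum_single_index]
  split <;> simp

lemma cbdry_single (c : QCube I) (a : ZMod 2) :
    cbdry (Finsupp.single c a)
      = ∑ i ∈ freeSet c,
          (Finsupp.single (Function.update c i (some false)) a
            + Finsupp.single (Function.update c i (some true)) a) := by
  unfold cbdry freeSet
  rw [Finsupp.sum_single_index]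
  simp

lemma sbdry_single (σ : Finset I) (a : ZMod 2) :
    sbdry (Finsupp.single σ a) = ∑ v ∈ σ, Finsupp.single (σ.erase v) a := by
  unfold sbdry
  rw [Finsupp.sum_single_index]
  simp

lemma sigmaOf_update (e c : QCube I) (i : I) (b : Bool) :
    sigmaOf e (Function.update c i (some b)) = (sigmaOf e c).erase i := by
  ext j
  simp only [mem_sigmaOf, Finset.mem_erase, Function.update_apply]
  by_cases h : j = i <;> simp [h]

lemma isFaceOf_update_iff {e c : QCube I} {i : I} (hc : c i = none)
    (hf : IsFaceOf e c) (b : Bool) :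
    IsFaceOf e (Function.update c i (some b)) ↔ e i = some b := by
  constructor
  · intro h
    have := h i (by simp)
    simpa using this
  · intro h j hj
    rcases eq_or_ne j i with rfl | hji
    · simpa using h
    · rw [Function.update_apply, if_neg hji] at hj ⊢
      exact hf j hj

lemma not_isFaceOf_update {e c : QCube I} {i : I} (hc : c i = none)
    (hf : ¬ IsFaceOf e c) (b : Bool) :
    ¬ IsFaceOf e (Function.update c i (some b)) := by
  intro h
  apply hf
  intro j hj
  have hji : j ≠ i := by rintro rfl; exact hj hc
  have := h j (by rwa [Function.update_apply, if_neg hji])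
  rwa [Function.update_apply, if_neg hji] at this

/-- Key commutation: localisation commutes with the boundary maps. -/
lemma loc_cbdry (e : QCube I) (S : QCube I →₀ ZMod 2) :
    loc e (cbdry S) = sbdry (loc e S) := by
  induction S using Finsupp.induction with
  | zero => simp [cbdry_zero, loc_zero, sbdry_zero]
  | single_add c a S _ _ ih =>
    rw [cbdry_add, loc_add, loc_add, sbdry_add, ih]
    congr 1
    rw [cbdry_single, loc_single]
    have hgen : ∀ (g : I → (QCube I →₀ ZMod 2)) (s : Finset I),
        loc e (∑ i ∈ s, g i) = ∑ i ∈ s, loc e (g i) := by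
      intro g s
      induction s using Finset.induction_on with
      | empty => simp [loc_zero]
      | insert _ _ h ih => rw [Finset.sum_insert h, Finset.sum_insert h, loc_add, ih]
    rw [hgen]
    have hsum : ∀ i ∈ freeSet c,
        loc e (Finsupp.single (Function.update c i (some false)) a
          + Finsupp.single (Function.update c i (some true)) a)
        = loc e (Finsupp.single (Function.update c i (some false)) a)
          + loc e (Finsupp.single (Function.update c i (some true)) a) :=
      fun i _ => loc_add e _ _
    rw [Finset.sum_congr rfl hsum]
    by_cases hf : IsFaceOf e c
    · rw [if_pos hf, sbdry_single]
      have : ∀ i ∈ freeSet c,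
          (loc e (Finsupp.single (Function.update c i (some false)) a)
            + loc e (Finsupp.single (Function.update c i (some true)) a))
          = if e i ≠ none then Finsupp.single ((sigmaOf e c).erase i) a else 0 := by
        intro i hi
        rw [mem_freeSet] at hi
        rw [loc_single, loc_single, sigmaOf_update, sigmaOf_update,
          isFaceOf_update_iff hi hf, isFaceOf_update_iff hi hf]
        rcases h : e i with _ | b
        · simp
        · cases b <;> simp
      rw [Finset.sum_congr rfl this, Finset.sum_ite, Finset.sum_const_zero, add_zero]
      apply Finset.sum_nbij' (fun i => i) (fun i => i) <;>
        simp +contextual [mem_sigmaOf, mem_freeSet]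
    · rw [if_neg hf, sbdry_zero]
      refine Finset.sum_eq_zero fun i hi => ?_
      rw [mem_freeSet] at hi
      rw [loc_single, loc_single, if_neg (not_isFaceOf_update hi hf false),
        if_neg (not_isFaceOf_update hi hf true), add_zero]

lemma faceOf_eq_of_sigmaOf_eq {e c c' : QCube I} (h : IsFaceOf e c)
    (h' : IsFaceOf e c') (hs : sigmaOf e c = sigmaOf e c') : c = c' := by
  funext j
  rcases he : e j with _ | b
  · have hc : c j = none := by
      by_contra hc
      have hec := h j hc
      rw [he] at hec
      exact hc hec.symm
    have hc' : c' j = none := by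
      by_contra hc'
      have hec := h' j hc'
      rw [he] at hec
      exact hc' hec.symm
    rw [hc, hc']
  · by_cases hj : j ∈ sigmaOf e c
    · have h1 := (mem_sigmaOf.mp hj).1
      have h2 := (mem_sigmaOf.mp (hs ▸ hj)).1
      rw [h1, h2]
    · have h1 : c j ≠ none := by
        intro hc; exact hj (mem_sigmaOf.mpr ⟨hc, by simp [he]⟩)
      have h2 : c' j ≠ none := by
        intro hc; exact (hs ▸ hj : j ∉ sigmaOf e c') (mem_sigmaOf.mpr ⟨hc, by simp [he]⟩)
      rw [← h j h1, ← h' j h2]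

lemma loc_apply (e : QCube I) (T : QCube I →₀ ZMod 2) (σ₀ : Finset I) :
    loc e T σ₀
      = ∑ c ∈ T.support, if IsFaceOf e c ∧ sigmaOf e c = σ₀ then T c else 0 := by
  unfold loc
  rw [Finsupp.sum_apply, Finsupp.sum]
  refine Finset.sum_congr rfl fun c _ => ?_
  by_cases hf : IsFaceOf e c
  · rw [if_pos hf]
    rw [show (Finset.univ.filter fun i => c i = none ∧ e i ≠ none) = sigmaOf e c from rfl]
    rw [Finsupp.single_apply]
    by_cases hs : sigmaOf e c = σ₀ <;> simp [hs, hf]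
  · simp [hf]

lemma mem_support_cbdry {S : QCube I →₀ ZMod 2} {f : QCube I}
    (hf : f ∈ (cbdry S).support) :
    ∃ c ∈ S.support, ∃ i, c i = none ∧ ∃ b, f = Function.update c i (some b) := by
  have h1 := Finsupp.support_sum hf
  rw [Finset.mem_biUnion] at h1
  obtain ⟨c, hc, hmem⟩ := h1
  refine ⟨c, hc, ?_⟩
  have h2 := Finsupp.support_finset_sum hmem
  rw [Finset.mem_biUnion] at h2
  obtain ⟨i, hi, hmem2⟩ := h2
  rw [Finset.mem_filter] at hi
  refine ⟨i, hi.2, ?_⟩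
  have := Finset.mem_of_subset Finsupp.support_add hmem2
  rw [Finset.mem_union] at this
  rcases this with h | h
  · exact ⟨false, Finset.mem_singleton.mp (Finsupp.support_single_subset h)⟩
  · exact ⟨true, Finset.mem_singleton.mp (Finsupp.support_single_subset h)⟩

lemma mem_support_loc {e : QCube I} {W : QCube I →₀ ZMod 2} {σ : Finset I}
    (hσ : σ ∈ (loc e W).support) :
    ∃ c ∈ W.support, IsFaceOf e c ∧ σ = sigmaOf e c := by
  have h1 := Finsupp.support_sum hσ
  rw [Finset.mem_biUnion] at h1
  obtain ⟨c, hc, hmem⟩ := h1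
  refine ⟨c, hc, ?_⟩
  by_cases hf : IsFaceOf e c
  · rw [if_pos hf] at hmem
    exact ⟨hf, Finset.mem_singleton.mp (Finsupp.support_single_subset hmem)⟩
  · rw [if_neg hf] at hmem; simp at hmem

lemma isFaceOf_update {c : QCube I} {i : I} (hi : c i = none) (b : Bool) :
    IsFaceOf (Function.update c i (some b)) c := by
  intro j hj
  rcases eq_or_ne j i with rfl | hji
  · exact absurd hi hj
  · rw [Function.update_apply, if_neg hji]

lemma freeSet_update {c : QCube I} {i : I} (hi : c i = none) (b : Bool) :
    freeSet (Function.update c i (some b)) = (freeSet c).erase i := by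
  ext j
  simp only [mem_freeSet, Finset.mem_erase, Function.update_apply]
  by_cases h : j = i <;> simp [h, hi]

lemma card_sigmaOf {e c : QCube I} (h : IsFaceOf e c) :
    (sigmaOf e c).card + qdim e = qdim c := by
  have h1 : sigmaOf e c = (freeSet c).filter (fun i => ¬ e i = none) := by
    ext j; simp [mem_sigmaOf, mem_freeSet, Finset.mem_filter, and_comm]
  have h2 : freeSet e = (freeSet c).filter (fun i => e i = none) := by
    ext j
    simp only [mem_freeSet, Finset.mem_filter]
    constructor
    · intro hj
      refine ⟨?_, hj⟩
      by_contra hc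
      exact absurd ((h j hc).symm.trans hj) hc
    · exact fun hj => hj.2
  rw [qdim_eq_card_freeSet, qdim_eq_card_freeSet, h1, h2, add_comm]
  exact Finset.card_filter_add_card_filter_not _

end Aux

/-- Fix `k < n`. An `n`-chain `S` over `ZMod 2` in a cube complex `X`
is a cycle iff for every `k`-cube `e` of `X` the localised chain `loc_e(S)` is a cycle in
the link `lk(e, X)`. Moreover, if `S` is a boundary (of an `(n+1)`-chain of `X`) then so
is `loc_e(S)` (of a chain supported on the simplices of `lk(e, X)`), for every `k`-cube
`e`. -/
theorem stmt15 {I : Type*} [Fintype I] [DecidableEq I]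
    (X : Set (QCube I)) (hX : IsCubeComplex X)
    (n k : ℕ) (hkn : k < n)
    (S : QCube I →₀ ZMod 2) (hsupp : ∀ c ∈ S.support, c ∈ X ∧ qdim c = n) :
    (cbdry S = 0 ↔ ∀ e : QCube I, e ∈ X → qdim e = k → sbdry (loc e S) = 0)
    ∧ ((∃ W : QCube I →₀ ZMod 2, (∀ c ∈ W.support, c ∈ X ∧ qdim c = n + 1) ∧ cbdry W = S) →
        ∀ e : QCube I, e ∈ X → qdim e = k →
          ∃ T : Finset I →₀ ZMod 2,
            (∀ σ ∈ T.support, inLink X e σ ∧ σ.card = n - k + 1) ∧ sbdry T = loc e S) := by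
  -- main proof
  have key : ∀ (T : QCube I →₀ ZMod 2) (f : QCube I), f ∈ T.support →
      qdim f = n - 1 → f ∈ X →
      ∃ e : QCube I, e ∈ X ∧ qdim e = k ∧ loc e T ≠ 0 := by
    intro T f hfT hdim hfX
    have hk : k ≤ (freeSet f).card := by
      rw [← qdim_eq_card_freeSet, hdim]; omega
    obtain ⟨A, hA, hAcard⟩ := Finset.exists_subset_card_eq hk
    set e : QCube I := fun j => if f j = none ∧ j ∉ A then some false else f j with he
    have hef : IsFaceOf e f := by
      intro j hj
      simp only [he]
      rw [if_neg (by tauto)]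
    have heX : e ∈ X := hX f hfX e hef
    have hfree : freeSet e = A := by
      ext j
      rw [mem_freeSet]
      simp only [he]
      by_cases hjA : j ∈ A
      · have hfj : f j = none := mem_freeSet.mp (hA hjA)
        simp [hjA, hfj]
      · by_cases hfj : f j = none
        · simp [hjA, hfj]
        · simp [hjA, hfj]
    refine ⟨e, heX, by rw [qdim_eq_card_freeSet, hfree, hAcard], ?_⟩
    intro h0
    have := loc_apply e T (sigmaOf e f)
    rw [h0] at this
    rw [Finset.sum_eq_single_of_mem f hfT] at this
    · rw [if_pos ⟨hef, rfl⟩] at this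
      exact (Finsupp.mem_support_iff.mp hfT) this.symm
    · intro c _ hcf
      rw [if_neg]
      rintro ⟨hc1, hc2⟩
      exact hcf (faceOf_eq_of_sigmaOf_eq hc1 hef hc2)
  constructor
  · constructor
    · intro hc e _ _
      rw [← loc_cbdry, hc, loc_zero]
    · intro hloc
      by_contra hne
      obtain ⟨f, hf⟩ := Finsupp.support_nonempty_iff.mpr hne
      obtain ⟨c, hcS, i, hci, b, rfl⟩ := mem_support_cbdry hf
      obtain ⟨hcX, hcdim⟩ := hsupp c hcS
      have hfX : Function.update c i (some b) ∈ X :=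
        hX c hcX _ (isFaceOf_update hci b)
      have hfdim : qdim (Function.update c i (some b)) = n - 1 := by
        rw [qdim_eq_card_freeSet, freeSet_update hci,
          Finset.card_erase_of_mem (mem_freeSet.mpr hci), ← qdim_eq_card_freeSet, hcdim]
      obtain ⟨e, heX, hedim, hne'⟩ := key (cbdry S) _ hf hfdim hfX
      exact hne' (by rw [loc_cbdry, hloc e heX hedim])
  · rintro ⟨W, hW, rfl⟩ e heX hedim
    refine ⟨loc e W, ?_, (loc_cbdry e W).symm⟩
    intro σ hσ
    obtain ⟨c, hcW, hfc, rfl⟩ := mem_support_loc hσ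
    obtain ⟨hcX, hcdim⟩ := hW c hcW
    constructor
    · constructor
      · intro i hi
        exact (mem_sigmaOf.mp hi).2
      · have : (fun i => if i ∈ sigmaOf e c then none else e i) = c := by
          funext j
          by_cases hj : j ∈ sigmaOf e c
          · rw [if_pos hj, (mem_sigmaOf.mp hj).1]
          · rw [if_neg hj]
            rcases hej : e j with _ | b
            · have hcj : c j = none := by
                by_contra hc
                exact hc ((hfc j hc).symm.trans hej)
              exact hcj.symm
            · have hcj : c j ≠ none := by
                intro hc
                exact hj (mem_sigmaOf.mpr ⟨hc, by rw [hej]; simp⟩)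
              rw [← hfc j hcj, hej]
        rw [this]; exact hcX
    · have := card_sigmaOf hfc
      rw [hedim, hcdim] at this
      omega


end
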